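/- Let x be a sequence of length m with distinct elements, i ∈ {1,...,m-1}, and y = τ(x,i). For all j ∈ {1,...,m} \ {i, i+1}: if PD_x[j] ∉ {j-i-1, j-i} then PD_y[j] = PD_x[j], and if RPD_x[j] ∉ {i-j, i+1-j} then RPD_y[j] = RPD_x[j]. -/

import Mathlib

/-- Binary tree shapes (Cartesian trees are determined by their shape). -/
inductive BTree : Type
  | nil : BTree
  | node : BTree → BTree → BTree
deriving DecidableEq

namespace BTree

/-- Number of nodes. -/
def size : BTree → ℕ
  | nil => 0
  | node l r => size l + size r + 1

/-- Length of the leftmost path. -/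
def LMP : BTree → ℕ
  | nil => 0
  | node l _ => LMP l + 1

/-- Length of the rightmost path. -/
def RMP : BTree → ℕ
  | nil => 0
  | node _ r => RMP r + 1

end BTree

/-- Minimum value of a list (0 for the empty list). -/
def listMin : List ℤ → ℤ
  | [] => 0
  | a :: t => t.foldl min a

/-- Index (0-based) of the minimum of a list. -/
def minIdx (l : List ℤ) : ℕ := l.idxOf (listMin l)

/-- Cartesian tree of a list, with fuel for termination. -/
def ctreeAux : ℕ → List ℤ → BTree
  | 0, _ => .nil
  | _ + 1, [] => .nil
  | n + 1, a :: t =>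
      let g := minIdx (a :: t)
      .node (ctreeAux n ((a :: t).take g)) (ctreeAux n ((a :: t).drop (g + 1)))

/-- Cartesian tree of a list: the root is the position of the minimum,
its subtrees are the Cartesian trees of the prefix and suffix around it. -/
def ctreeL (l : List ℤ) : BTree := ctreeAux l.length l

/-- The factor x[a..b] (1-based positions) of a sequence, as a list. -/
def seqList (x : ℕ → ℤ) (a b : ℕ) : List ℤ :=
  (List.range (b + 1 - a)).map (fun k => x (a + k))

/-- Cartesian tree of the sequence x[1..m]. -/
def ctreeOf (m : ℕ) (x : ℕ → ℤ) : BTree := ctreeL (seqList x 1 m)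

/-- Positions j < h (1-based) with x[j] < x[h]. -/
def PDset (x : ℕ → ℤ) (h : ℕ) : Finset ℕ :=
  (Finset.Ico 1 h).filter (fun j => x j < x h)

/-- Parent-distance table: PD_x[h] = h - max{j < h : x[j] < x[h]}, 0 if no such j. -/
def PD (x : ℕ → ℤ) (h : ℕ) : ℕ :=
  if hs : (PDset x h).Nonempty then h - (PDset x h).max' hs else 0

/-- Positions h < j ≤ m with x[j] < x[h]. -/
def RPDset (m : ℕ) (x : ℕ → ℤ) (h : ℕ) : Finset ℕ :=
  (Finset.Ioc h m).filter (fun j => x j < x h)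

/-- Reverse parent-distance table: RPD_x[h] = min{j > h : x[j] < x[h]} - h, 0 if no such j. -/
def RPD (m : ℕ) (x : ℕ → ℤ) (h : ℕ) : ℕ :=
  if hs : (RPDset m x h).Nonempty then (RPDset m x h).min' hs - h else 0

/-- Referent of h: the smallest position j > h with x[j] < x[h], or -1 if none. -/
def refD (m : ℕ) (x : ℕ → ℤ) (h : ℕ) : ℤ :=
  if hs : (RPDset m x h).Nonempty then ((RPDset m x h).min' hs : ℤ) else -1

/-- Skipped-number table: SN_x[h] is the number of nodes on the rightmost path of the
left subtree of node h in C(x), i.e. the number of positions whose referent is h. -/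
def SN (m : ℕ) (x : ℕ → ℤ) (h : ℕ) : ℕ :=
  ((Finset.Ico 1 h).filter (fun j => refD m x j = (h : ℤ))).card

/-- The swap τ(x,i): exchange the entries at positions i and i+1. -/
def swapAt (x : ℕ → ℤ) (i : ℕ) : ℕ → ℤ :=
  fun j => if j = i then x (i + 1) else if j = i + 1 then x i else x j

/-- ng(T,i): the Cartesian trees obtained from a sequence realizing T by one swap
at position i (valid positions are 1 ≤ i ≤ m-1). -/
def ngi (m : ℕ) (T : BTree) (i : ℕ) : Set BTree :=
  { S | 1 ≤ i ∧ i + 1 ≤ m ∧ ∃ x : ℕ → ℤ, Set.InjOn x (Set.Icc 1 m) ∧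
        ctreeOf m x = T ∧ S = ctreeOf m (swapAt x i) }

/-- ng(T): the swap neighbourhood of T. -/
def ng (m : ℕ) (T : BTree) : Set BTree := ⋃ i, ngi m T i

/-- Number of permutations of {1,...,n} whose Cartesian tree is A. -/
noncomputable def permCount (n : ℕ) (A : BTree) : ℕ :=
  Set.ncard { σ : Equiv.Perm (Fin n) |
    ctreeL (List.ofFn (fun k : Fin n => ((σ k : ℕ) : ℤ) + 1)) = A }

/-- Product over all nodes t of A of the size of the subtree rooted at t. -/
def hookProd : BTree → ℕ
  | .nil => 1
  | .node l r => (BTree.node l r).size * hookProd l * hookProd r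


theorem stmt4 (m i : ℕ) (x : ℕ → ℤ) (hx : Set.InjOn x (Set.Icc 1 m))
    (hi1 : 1 ≤ i) (him : i + 1 ≤ m) :
    ∀ j ∈ Finset.Icc 1 m, j ≠ i → j ≠ i + 1 →
      (((PD x j : ℤ) ≠ (j : ℤ) - i - 1 → (PD x j : ℤ) ≠ (j : ℤ) - i →
          PD (swapAt x i) j = PD x j) ∧
       ((RPD m x j : ℤ) ≠ (i : ℤ) - j → (RPD m x j : ℤ) ≠ (i : ℤ) + 1 - j →
          RPD m (swapAt x i) j = RPD m x j)) := by
  intro j hj hji hji1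
  simp only [Finset.mem_Icc] at hj
  set σ := Equiv.swap i (i + 1) with hσ
  have hσi : σ i = i + 1 := Equiv.swap_apply_left _ _
  have hσi1 : σ (i + 1) = i := Equiv.swap_apply_right _ _
  have hσinv : ∀ k, σ (σ k) = k := fun k => Equiv.swap_apply_self _ _ k
  have hyx : ∀ k, swapAt x i k = x (σ k) := by
    intro k
    rcases eq_or_ne k i with rfl | h1
    · simp [swapAt, hσi]
    rcases eq_or_ne k (i + 1) with rfl | h2
    · simp [swapAt, hσi1, h1]
    · rw [Equiv.swap_apply_of_ne_of_ne h1 h2]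
      simp [swapAt, h1, h2]
  have hσj : σ j = j := Equiv.swap_apply_of_ne_of_ne hji hji1
  have hcase : j < i ∨ i + 1 < j := by omega
  have hrange : ∀ k, (1 ≤ k ∧ k < j) ↔ (1 ≤ σ k ∧ σ k < j) := by
    intro k
    rcases eq_or_ne k i with rfl | h1
    · rw [hσi]; omega
    rcases eq_or_ne k (i + 1) with rfl | h2
    · rw [hσi1]; omega
    · rw [Equiv.swap_apply_of_ne_of_ne h1 h2]
  have hrange2 : ∀ k, (j < k ∧ k ≤ m) ↔ (j < σ k ∧ σ k ≤ m) := by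
    intro k
    rcases eq_or_ne k i with rfl | h1
    · rw [hσi]; omega
    rcases eq_or_ne k (i + 1) with rfl | h2
    · rw [hσi1]; omega
    · rw [Equiv.swap_apply_of_ne_of_ne h1 h2]
  have hmemPD : ∀ k, k ∈ PDset (swapAt x i) j ↔ σ k ∈ PDset x j := by
    intro k
    simp only [PDset, Finset.mem_filter, Finset.mem_Ico, hyx, hσj]
    rw [hrange k]
  have hmemRPD : ∀ k, k ∈ RPDset m (swapAt x i) j ↔ σ k ∈ RPDset m x j := by
    intro k
    simp only [RPDset, Finset.mem_filter, Finset.mem_Ioc, hyx, hσj]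
    rw [hrange2 k]
  constructor
  · -- PD part
    intro h1 h2
    unfold PD at *
    by_cases hs : (PDset x j).Nonempty
    · rw [dif_pos hs] at h1 h2
      set g := (PDset x j).max' hs with hg
      have hgmem : g ∈ PDset x j := (PDset x j).max'_mem hs
      have hgrange : 1 ≤ g ∧ g < j := by
        have := (Finset.mem_filter.1 hgmem).1
        simpa [Finset.mem_Ico] using this
      have hcast : ((j - g : ℕ) : ℤ) = (j : ℤ) - g := by omega
      have hgi : g ≠ i := by intro h; apply h2; omega
      have hgi1 : g ≠ i + 1 := by intro h; apply h1; omega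
      have hσg : σ g = g := Equiv.swap_apply_of_ne_of_ne hgi hgi1
      have hgmem' : g ∈ PDset (swapAt x i) j := (hmemPD g).2 (by rwa [hσg])
      have hs' : (PDset (swapAt x i) j).Nonempty := ⟨g, hgmem'⟩
      rw [dif_pos hs', dif_pos hs]
      congr 1
      refine le_antisymm (Finset.max'_le _ _ _ ?_) (Finset.le_max' _ _ hgmem')
      intro k hk
      have hkσ : σ k ∈ PDset x j := (hmemPD k).1 hk
      have hle : σ k ≤ g := Finset.le_max' _ _ hkσ
      rcases eq_or_ne k i with rfl | hk1
      · rw [hσi] at hle; omega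
      rcases eq_or_ne k (i + 1) with rfl | hk2
      · rw [hσi1] at hle; omega
      · rwa [Equiv.swap_apply_of_ne_of_ne hk1 hk2] at hle
    · have hs' : ¬(PDset (swapAt x i) j).Nonempty := by
        rintro ⟨k, hk⟩
        exact hs ⟨σ k, (hmemPD k).1 hk⟩
      rw [dif_neg hs', dif_neg hs]
  · -- RPD part
    intro h1 h2
    unfold RPD at *
    by_cases hs : (RPDset m x j).Nonempty
    · rw [dif_pos hs] at h1 h2
      set g := (RPDset m x j).min' hs with hg
      have hgmem : g ∈ RPDset m x j := (RPDset m x j).min'_mem hs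
      have hgrange : j < g ∧ g ≤ m := by
        have := (Finset.mem_filter.1 hgmem).1
        simpa [Finset.mem_Ioc] using this
      have hcast : ((g - j : ℕ) : ℤ) = (g : ℤ) - j := by omega
      have hgi : g ≠ i := by intro h; apply h1; omega
      have hgi1 : g ≠ i + 1 := by intro h; apply h2; omega
      have hσg : σ g = g := Equiv.swap_apply_of_ne_of_ne hgi hgi1
      have hgmem' : g ∈ RPDset m (swapAt x i) j := (hmemRPD g).2 (by rwa [hσg])
      have hs' : (RPDset m (swapAt x i) j).Nonempty := ⟨g, hgmem'⟩
      rw [dif_pos hs', dif_pos hs]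
      congr 1
      refine le_antisymm (Finset.min'_le _ _ hgmem') (Finset.le_min' _ _ _ ?_)
      intro k hk
      have hkσ : σ k ∈ RPDset m x j := (hmemRPD k).1 hk
      have hle : g ≤ σ k := Finset.min'_le _ _ hkσ
      rcases eq_or_ne k i with rfl | hk1
      · rw [hσi] at hle; omega
      rcases eq_or_ne k (i + 1) with rfl | hk2
      · rw [hσi1] at hle; omega
      · rwa [Equiv.swap_apply_of_ne_of_ne hk1 hk2] at hle
    · have hs' : ¬(RPDset m (swapAt x i) j).Nonempty := by
        rintro ⟨k, hk⟩
        exact hs ⟨σ k, (hmemRPD k).1 hk⟩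
      rw [dif_neg hs', dif_neg hs]
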